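/- Let ψ be an r^top-sequence of a DAG G = (V,E) and let u, v ∈ B_{r^top}(ψ) be distinct vertices. Then reach_{r^top}(u | ψu) ∩ reach_{r^top}(v | ψv) = ∅, where ψu and ψv denote ψ extended by u and by v respectively. -/
import Mathlib


universe u

variable {V : Type u}

/-- Acyclicity of an edge relation (DAG condition). -/
def Acyclic (E : V → V → Prop) : Prop := ∀ v : V, ¬ Relation.TransGen E v v

/-- Immediate predecessors of a vertex. -/
def pre (E : V → V → Prop) (v : V) : Set V := {u | E u v}

/-- Immediate successors of a vertex. -/
def suc (E : V → V → Prop) (v : V) : Set V := {u | E v u}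

/-- The reverse DAG edge relation. -/
def Erev (E : V → V → Prop) : V → V → Prop := fun u v => E v u

/-- `r` is a visit rule for the DAG with edge relation `E`. -/
def VisitRule (E : V → V → Prop) (r : V → Set (Set V)) : Prop :=
  ∀ v : V, (r v).Nonempty ∧ ∀ Q ∈ r v, Q ⊆ pre E v

/-- `ψ` is an `r`-sequence. -/
def IsRSeq (r : V → Set (Set V)) (ψ : List V) : Prop :=
  ψ.Nodup ∧ ∀ i : Fin ψ.length, ∃ Q ∈ r (ψ.get i), ∀ u ∈ Q, u ∈ ψ.take i.1

/-- `ψ` is an `r`-visit: an `r`-sequence containing all vertices. -/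
def IsRVisit (r : V → Set (Set V)) (ψ : List V) : Prop :=
  IsRSeq r ψ ∧ ∀ v : V, v ∈ ψ

/-- The `r`-boundary of a sequence. -/
def boundary (r : V → Set (Set V)) (ψ : List V) : Set V :=
  {v | v ∉ ψ ∧ ∃ Q ∈ r v, Q ≠ (∅ : Set V) ∧ ∀ u ∈ Q, u ∈ ψ}

/-- The `r`-boundary complexity of a sequence. -/
noncomputable def bnd (r : V → Set (Set V)) (ψ : List V) : ℕ :=
  (Finset.Icc 1 ψ.length).sup fun i => (boundary r (ψ.take i)).ncard

/-- The topological visit rule. -/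
def rtop (E : V → V → Prop) : V → Set (Set V) := fun v => {pre E v}

/-- Descendants of a vertex. -/
def des (E : V → V → Prop) (v : V) : Set V := {u | Relation.TransGen E v u}

/-- The `r`-enabled reach of `v` given the `r`-sequence `ψ`. -/
def reach (E : V → V → Prop) (r : V → Set (Set V)) (v : V) (ψ : List V) : Set V :=
  {u | ∃ ψ' : List V, (∀ x ∈ ψ' ++ [u], x ∈ des E v) ∧ IsRSeq r (ψ ++ (ψ' ++ [u]))}

lemma pre_mem_of_mem {E : V → V → Prop} {ψ : List V} (h : IsRSeq (rtop E) ψ)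
    {w : V} (hw : w ∈ ψ) {p : V} (hp : E p w) : p ∈ ψ := by
  obtain ⟨i, hi⟩ := List.mem_iff_get.mp hw
  obtain ⟨Q, hQ, hall⟩ := h.2 i
  rw [rtop, Set.mem_singleton_iff] at hQ
  subst hi
  subst hQ
  exact List.take_subset _ _ (hall p hp)

lemma anc_mem {E : V → V → Prop} {ψ : List V} (h : IsRSeq (rtop E) ψ)
    {w z : V} (hzw : Relation.TransGen E z w) (hw : w ∈ ψ) : z ∈ ψ := by
  induction hzw with
  | single h' => exact pre_mem_of_mem h hw h'
  | tail _ h' ih => exact ih (pre_mem_of_mem h hw h')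

lemma not_des_of_boundary {E : V → V → Prop} {ψ : List V} (h : IsRSeq (rtop E) ψ)
    {u v : V} (hu : u ∈ boundary (rtop E) ψ) (hv : v ∈ boundary (rtop E) ψ) :
    v ∉ des E u := by
  intro hd
  obtain ⟨p, hup, hpv⟩ := (Relation.TransGen.tail'_iff).mp hd
  obtain ⟨hvψ, Q, hQ, -, hQψ⟩ := hv
  rw [rtop, Set.mem_singleton_iff] at hQ
  subst hQ
  have hpψ : p ∈ ψ := hQψ p hpv
  rcases (Relation.reflTransGen_iff_eq_or_transGen.mp hup) with rfl | ht
  · exact hu.1 hpψ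
  · exact hu.1 (anc_mem h ht hpψ)

theorem stmt_10 {V : Type u} [Fintype V] [DecidableEq V] (E : V → V → Prop) (hG : Acyclic E)
    (ψ : List V) (hψ : IsRSeq (rtop E) ψ) (u v : V) (huv : u ≠ v)
    (hu : u ∈ boundary (rtop E) ψ) (hv : v ∈ boundary (rtop E) ψ) :
    reach E (rtop E) u (ψ ++ [u]) ∩ reach E (rtop E) v (ψ ++ [v]) = ∅ := by
  ext x
  simp only [Set.mem_inter_iff, Set.mem_empty_iff_false, iff_false, not_and]
  rintro ⟨ψu, hdesu, hsequ⟩ ⟨ψv, hdesv, hseqv⟩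
  have hxv : x ∈ des E v := hdesv x (by simp)
  have hxfull : x ∈ (ψ ++ [u]) ++ (ψu ++ [x]) := by simp
  have hvfull : v ∈ (ψ ++ [u]) ++ (ψu ++ [x]) := anc_mem hsequ hxv hxfull
  have hvndu : v ∉ des E u := not_des_of_boundary hψ hu hv
  simp only [List.mem_append, List.mem_singleton] at hvfull
  rcases hvfull with (hvψ | rfl) | (hvψu | rfl)
  · exact hv.1 hvψ
  · exact huv rfl
  · exact hvndu (hdesu v (by simp [hvψu]))
  · exact hvndu (hdesu _ (List.mem_append_right _ (List.mem_singleton_self _)))
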